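/- Let $C\in\mathbb{C}^{p\times n}$, $E,A\in\mathbb{C}^{n\times n}$, $B\in\mathbb{C}^{n\times m}$, distinct points $z_1,\dots,z_S$ with $z_jE-A$ invertible, $H(z)=C(zE-A)^{-1}B$, weights $q_j$, $Q(z)=\sum_j q_j/(z-z_j)$, and the interpolatory barycentric surrogate $\widetilde{H}(z)=\sum_j\frac{q_jH(z_j)}{z-z_j}/Q(z)$. Set $\widetilde{B}=E\sum_{j=1}^S q_j(z_jE-A)^{-1}B$. Then for every $z$ with $zE-A$ invertible, $z\notin\{z_1,\dots,z_S\}$, and $Q(z)\neq 0$, one has $\widetilde{H}(z)-H(z)=Q(z)^{-1}\,C(zE-A)^{-1}\widetilde{B}$. -/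
import Mathlib


/-- Exact error representation for the barycentric surrogate of the
output transfer function: `H̃(z) - H(z) = Q(z)⁻¹ • C (zE - A)⁻¹ B̃`. -/
theorem surrogate_error_representation
    {n m p S : ℕ}
    (C : Matrix (Fin p) (Fin n) ℂ)
    (E A : Matrix (Fin n) (Fin n) ℂ) (B : Matrix (Fin n) (Fin m) ℂ)
    (z : Fin S → ℂ) (hz : Function.Injective z)
    (hinv : ∀ j, IsUnit (z j • E - A))
    (q : Fin S → ℂ)
    (H : ℂ → Matrix (Fin p) (Fin m) ℂ)
    (hH : ∀ w, H w = C * ((w • E - A)⁻¹ * B))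
    (Q : ℂ → ℂ) (hQ : ∀ w, Q w = ∑ j, q j / (w - z j))
    (Ht : ℂ → Matrix (Fin p) (Fin m) ℂ)
    (hHt : ∀ w, Ht w = (Q w)⁻¹ • ∑ j, (q j / (w - z j)) • H (z j))
    (Bt : Matrix (Fin n) (Fin m) ℂ)
    (hBt : Bt = E * ∑ j, q j • ((z j • E - A)⁻¹ * B)) :
    ∀ w : ℂ, IsUnit (w • E - A) → w ∉ Set.range z → Q w ≠ 0 →
      Ht w - H w = (Q w)⁻¹ • (C * ((w • E - A)⁻¹ * Bt)) := by
  intro w hw hwz hQw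
  have hne : ∀ j, w - z j ≠ 0 := by
    intro j h
    exact hwz ⟨j, by linear_combination -h⟩
  have hwdet : IsUnit (w • E - A).det := (Matrix.isUnit_iff_isUnit_det _).mp hw
  have hjdet : ∀ j, IsUnit ((z j • E - A).det) := fun j =>
    (Matrix.isUnit_iff_isUnit_det _).mp (hinv j)
  have key : ∀ j, (z j • E - A)⁻¹ - (w • E - A)⁻¹
      = (w - z j) • ((w • E - A)⁻¹ * (E * (z j • E - A)⁻¹)) := by
    intro j
    have h1 : (w • E - A)⁻¹ * (w • E - A) = 1 := Matrix.nonsing_inv_mul _ hwdet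
    have h2 : (z j • E - A) * (z j • E - A)⁻¹ = 1 := Matrix.mul_nonsing_inv _ (hjdet j)
    have hs : (w - z j) • E = (w • E - A) - (z j • E - A) := by
      rw [sub_smul]; abel
    symm
    calc (w - z j) • ((w • E - A)⁻¹ * (E * (z j • E - A)⁻¹))
        = (w • E - A)⁻¹ * (((w - z j) • E) * (z j • E - A)⁻¹) := by
          simp [Matrix.smul_mul, Matrix.mul_smul, Matrix.mul_assoc]
      _ = (w • E - A)⁻¹ * (((w • E - A) - (z j • E - A)) * (z j • E - A)⁻¹) := by rw [hs]
      _ = (z j • E - A)⁻¹ - (w • E - A)⁻¹ := by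
          rw [Matrix.sub_mul, Matrix.mul_sub, h2, ← Matrix.mul_assoc, h1,
            Matrix.one_mul, Matrix.mul_one]
  have hterm : ∀ j, (q j / (w - z j)) • (H (z j) - H w)
      = q j • (C * ((w • E - A)⁻¹ * (E * ((z j • E - A)⁻¹ * B)))) := by
    intro j
    rw [hH, hH, ← Matrix.mul_sub, ← Matrix.sub_mul, key j]
    simp only [Matrix.smul_mul, Matrix.mul_smul, smul_smul]
    have hc : (q j / (w - z j)) * (w - z j) = q j := div_mul_cancel₀ _ (hne j)
    rw [hc]
    congr 1
    simp [Matrix.mul_assoc]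
  have hsum : ∑ j, (q j / (w - z j)) • (H (z j) - H w)
      = C * ((w • E - A)⁻¹ * Bt) := by
    rw [hBt]
    simp only [hterm]
    simp [Matrix.mul_sum, Matrix.mul_smul, Matrix.mul_assoc]
  have hsplit : ∑ j, (q j / (w - z j)) • (H (z j) - H w)
      = (∑ j, (q j / (w - z j)) • H (z j)) - Q w • H w := by
    rw [hQ, Finset.sum_smul, ← Finset.sum_sub_distrib]
    simp [smul_sub]
  rw [hHt, ← hsum, hsplit, smul_sub, inv_smul_smul₀ hQw]
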